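/- arXiv:2309.16734 — 2 statements merged into one kernel-verified Lean document; each statement's English description precedes it below -/
import Mathlib

section
/- Any self-consistent family of regular Borel probability measures on a projective family of compact Hausdorff spaces extends to a unique regular Borel measure on the projective limit: if μ_γ = (p_{γγ'})_* μ_{γ'} for all γ' ≥ γ, then there is a unique regular Borel measure μ on the projective limit X̃ such that ∫_{X̃} (f_γ ∘ p_γ) dμ = ∫_{X_γ} f_γ dμ_γ for every γ and every continuous f_γ on X_γ. -/
open MeasureTheory
open scoped ENNReal NNReal

/-- Any self-consistent family of regular Borel probability measures on a projective family of
compact Hausdorff spaces extends to a unique regular Borel measure on the projective limit: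
if `μ_γ = (p_{γγ'})_* μ_{γ'}` for all `γ' ≥ γ`, then there is a unique regular Borel measure `ν`
on the projective limit such that `∫ (f_γ ∘ p_γ) dν = ∫ f_γ dμ_γ` for every `γ` and every
continuous `f_γ`. -/
theorem stmt_7 {L : Type*} [PartialOrder L] [IsDirected L (· ≤ ·)] [Nonempty L]
    (X : L → Type*) [∀ γ, TopologicalSpace (X γ)] [∀ γ, CompactSpace (X γ)]
    [∀ γ, T2Space (X γ)] [∀ γ, MeasurableSpace (X γ)] [∀ γ, BorelSpace (X γ)]
    (p : ∀ {γ γ' : L}, γ ≤ γ' → X γ' → X γ)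
    (hcont : ∀ {γ γ' : L} (h : γ ≤ γ'), Continuous (p h))
    (hsurj : ∀ {γ γ' : L} (h : γ ≤ γ'), Function.Surjective (p h))
    (hcomp : ∀ {γ γ' γ'' : L} (h : γ ≤ γ') (h' : γ' ≤ γ'') (x : X γ''),
      p h (p h' x) = p (h.trans h') x)
    (μ : ∀ γ, Measure (X γ)) (hprob : ∀ γ, IsProbabilityMeasure (μ γ))
    (hreg : ∀ γ, (μ γ).Regular)
    (hcons : ∀ (γ γ' : L) (h : γ ≤ γ'), (μ γ').map (p h) = μ γ) :
    letI S := {x : ∀ γ, X γ // ∀ (γ γ' : L) (h : γ ≤ γ'), p h (x γ') = x γ}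
    letI : MeasurableSpace S := borel S
    ∃! ν : Measure S, ν.Regular ∧
      ∀ (γ : L) (f : X γ → ℝ), Continuous f →
        ∫ x : S, f (x.1 γ) ∂ν = ∫ y, f y ∂(μ γ) := by
  classical
  set S := {x : ∀ γ, X γ // ∀ (γ γ' : L) (h : γ ≤ γ'), p h (x γ') = x γ} with hSdef
  letI : MeasurableSpace S := borel S
  haveI : BorelSpace S := ⟨rfl⟩
  -- compactness of S
  haveI : CompactSpace S := by
    have hcl : IsClosed {x : ∀ γ, X γ | ∀ (γ γ' : L) (h : γ ≤ γ'), p h (x γ') = x γ} := by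
      have : {x : ∀ γ, X γ | ∀ (γ γ' : L) (h : γ ≤ γ'), p h (x γ') = x γ}
          = ⋂ (γ : L) (γ' : L) (h : γ ≤ γ'), {x : ∀ γ, X γ | p h (x γ') = x γ} := by
        ext x; simp [Set.mem_iInter]
      rw [this]
      exact isClosed_iInter fun γ => isClosed_iInter fun γ' => isClosed_iInter fun h =>
        isClosed_eq ((hcont h).comp (continuous_apply γ')) (continuous_apply γ)
    exact isCompact_iff_compactSpace.mp hcl.isCompact
  -- the coordinate projections are continuous
  have hπc : ∀ γ : L, Continuous fun x : S => x.1 γ := fun γ =>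
    (continuous_apply γ).comp continuous_subtype_val
  have hπm : ∀ γ : L, Measurable fun x : S => x.1 γ := fun γ => (hπc γ).measurable
  -- the spaces are nonempty
  have hXne : ∀ γ, Nonempty (X γ) := by
    intro γ
    by_contra h
    rw [not_nonempty_iff] at h
    have h1 := (hprob γ).measure_univ
    rw [Set.univ_eq_empty_iff.mpr h, measure_empty] at h1
    exact zero_ne_one h1
  -- surjectivity of coordinate projections
  have hπsurj : ∀ (γ₀ : L) (y₀ : X γ₀), ∃ x : S, x.1 γ₀ = y₀ := by
    intro γ₀ y₀
    have hKc : IsCompact {x : ∀ γ, X γ | x γ₀ = y₀} :=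
      (isClosed_eq (continuous_apply γ₀) continuous_const).isCompact
    have hZc : ∀ q : {q : L × L // q.1 ≤ q.2},
        IsClosed {x : ∀ γ, X γ | p q.2 (x q.1.2) = x q.1.1} := fun q =>
      isClosed_eq ((hcont q.2).comp (continuous_apply q.1.2)) (continuous_apply q.1.1)
    have hfin : ∀ t : Finset {q : L × L // q.1 ≤ q.2},
        ({x : ∀ γ, X γ | x γ₀ = y₀} ∩
          ⋂ q ∈ t, {x : ∀ γ, X γ | p q.2 (x q.1.2) = x q.1.1}).Nonempty := by
      intro t
      obtain ⟨δ, hδ⟩ := Finset.exists_le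
        (insert γ₀ (t.image (fun q => q.1.1) ∪ t.image (fun q => q.1.2)))
      have hγ₀δ : γ₀ ≤ δ := hδ γ₀ (Finset.mem_insert_self _ _)
      obtain ⟨y, hy⟩ := hsurj hγ₀δ y₀
      refine ⟨fun γ => if h : γ ≤ δ then p h y else (hXne γ).some, ?_, ?_⟩
      · simp only [Set.mem_setOf_eq, dif_pos hγ₀δ, hy]
      · simp only [Set.mem_iInter]
        intro q hq
        have h1 : q.1.1 ≤ δ := hδ _ (by
          refine Finset.mem_insert_of_mem (Finset.mem_union_left _ ?_)
          exact Finset.mem_image_of_mem _ hq)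
        have h2 : q.1.2 ≤ δ := hδ _ (by
          refine Finset.mem_insert_of_mem (Finset.mem_union_right _ ?_)
          exact Finset.mem_image_of_mem _ hq)
        simp only [Set.mem_setOf_eq, dif_pos h1, dif_pos h2]
        exact hcomp q.2 h2 y
    obtain ⟨x, hx1, hx2⟩ := hKc.inter_iInter_nonempty _ hZc hfin
    refine ⟨⟨x, fun γ γ' h => ?_⟩, hx1⟩
    exact Set.mem_iInter.mp hx2 ⟨(γ, γ'), h⟩
  -- p (le_refl γ) is the identity
  have hrefl : ∀ (γ : L) (h : γ ≤ γ) (z : X γ), p h z = z := by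
    intro γ h z
    obtain ⟨w, rfl⟩ := hsurj h z
    rw [hcomp h h w]
  -- image and preimage identities
  have himg : ∀ (γ γ' : L) (h : γ ≤ γ') (A : Set S),
      (fun x : S => x.1 γ) '' A = p h '' ((fun x : S => x.1 γ') '' A) := by
    intro γ γ' h A
    rw [Set.image_image]
    exact (Set.image_congr fun x _ => (x.2 γ γ' h).symm)
  have hpre : ∀ (γ γ' : L) (h : γ ≤ γ') (B : Set (X γ)),
      (fun x : S => x.1 γ') '' ((fun x : S => x.1 γ) ⁻¹' B) = p h ⁻¹' B := by
    intro γ γ' h B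
    ext z
    constructor
    · rintro ⟨x, hx, rfl⟩
      simpa [x.2 γ γ' h] using hx
    · intro hz
      obtain ⟨x, rfl⟩ := hπsurj γ' z
      exact ⟨x, by simpa [x.2 γ γ' h] using hz, rfl⟩
  -- measurability of images of compacts
  have himm : ∀ (γ : L) (A : Set S), IsCompact A →
      MeasurableSet ((fun x : S => x.1 γ) '' A) := fun γ A hA =>
    (hA.image (hπc γ)).isClosed.measurableSet
  -- the content candidate
  set m : Set S → ℝ≥0∞ := fun A => ⨅ γ : L, μ γ ((fun x : S => x.1 γ) '' A) with hmdef
  -- antitonicity of the net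
  have hant : ∀ (A : Set S), IsCompact A → ∀ (γ γ' : L) (h : γ ≤ γ'),
      μ γ' ((fun x : S => x.1 γ') '' A) ≤ μ γ ((fun x : S => x.1 γ) '' A) := by
    intro A hA γ γ' h
    have h1 : μ γ ((fun x : S => x.1 γ) '' A)
        = μ γ' (p h ⁻¹' ((fun x : S => x.1 γ) '' A)) := by
      conv_lhs => rw [← hcons γ γ' h]
      rw [Measure.map_apply (hcont h).measurable (himm γ _ hA)]
    rw [h1]
    apply measure_mono
    rintro z ⟨x, hx, rfl⟩
    exact ⟨x, hx, (x.2 γ γ' h).symm⟩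
  have hmne : ∀ A : Set S, m A ≠ ⊤ := by
    intro A
    refine ne_top_of_le_ne_top (by simp : (1 : ℝ≥0∞) ≠ ⊤) ?_
    obtain ⟨γ⟩ := ‹Nonempty L›
    exact (iInf_le _ γ).trans prob_le_one
  -- cofinal description of the infimum
  have hcof : ∀ (A : Set S), IsCompact A → ∀ γ₀ : L,
      m A = ⨅ γ : {γ : L // γ₀ ≤ γ}, μ γ.1 ((fun x : S => x.1 γ.1) '' A) := by
    intro A hA γ₀
    apply le_antisymm
    · exact le_iInf fun γ => iInf_le _ γ.1
    · refine le_iInf fun γ₁ => ?_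
      obtain ⟨δ, h1, h2⟩ := directed_of (· ≤ ·) γ₀ γ₁
      exact iInf_le_of_le ⟨δ, h1⟩ (hant A hA γ₁ δ h2)
  -- disjoint compacts have disjoint images for some index
  have hsep : ∀ K₁ K₂ : Set S, IsCompact K₁ → IsCompact K₂ → Disjoint K₁ K₂ →
      ∃ γ : L, Disjoint ((fun x : S => x.1 γ) '' K₁) ((fun x : S => x.1 γ) '' K₂) := by
    intro K₁ K₂ hK₁ hK₂ hd
    by_contra hcon
    push_neg at hcon
    have hZc : ∀ γ : L, IsClosed {q : S × S | q.1.1 γ = q.2.1 γ} := fun γ =>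
      isClosed_eq ((hπc γ).comp continuous_fst) ((hπc γ).comp continuous_snd)
    have hfin : ∀ t : Finset L,
        ((K₁ ×ˢ K₂) ∩ ⋂ γ ∈ t, {q : S × S | q.1.1 γ = q.2.1 γ}).Nonempty := by
      intro t
      obtain ⟨δ, hδ⟩ := Finset.exists_le t
      obtain ⟨z, hz₁, hz₂⟩ := Set.not_disjoint_iff.mp (hcon δ)
      obtain ⟨x, hx, hxz⟩ := hz₁
      obtain ⟨y, hy, hyz⟩ := hz₂
      refine ⟨(x, y), ⟨hx, hy⟩, ?_⟩
      simp only [Set.mem_iInter, Set.mem_setOf_eq]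
      intro γ hγ
      have h := hδ γ hγ
      have hxyδ : x.1 δ = y.1 δ := hxz.trans hyz.symm
      rw [← x.2 γ δ h, ← y.2 γ δ h, hxyδ]
    obtain ⟨⟨x, y⟩, hxy, hall⟩ := (hK₁.prod hK₂).inter_iInter_nonempty _ hZc hfin
    have : x = y := Subtype.ext (funext fun γ => Set.mem_iInter.mp hall γ)
    exact Set.disjoint_left.mp hd hxy.1 (this ▸ hxy.2)
  -- basic content inequalities
  have hm_mono : ∀ A B : Set S, A ⊆ B → m A ≤ m B := fun A B hAB =>
    iInf_mono fun γ => measure_mono (Set.image_mono hAB)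
  have hm_sup_le : ∀ K₁ K₂ : Set S, IsCompact K₁ → IsCompact K₂ →
      m (K₁ ∪ K₂) ≤ m K₁ + m K₂ := by
    intro K₁ K₂ hK₁ hK₂
    have key : (⨅ γ : L, μ γ ((fun x : S => x.1 γ) '' K₁))
        + (⨅ γ : L, μ γ ((fun x : S => x.1 γ) '' K₂))
        = ⨅ γ : L, (μ γ ((fun x : S => x.1 γ) '' K₁) + μ γ ((fun x : S => x.1 γ) '' K₂)) := by
      apply ENNReal.iInf_add_iInf
      intro i j
      obtain ⟨k, hik, hjk⟩ := directed_of (· ≤ ·) i j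
      exact ⟨k, add_le_add (hant K₁ hK₁ i k hik) (hant K₂ hK₂ j k hjk)⟩
    have h2 : m (K₁ ∪ K₂)
        ≤ ⨅ γ : L, (μ γ ((fun x : S => x.1 γ) '' K₁) + μ γ ((fun x : S => x.1 γ) '' K₂)) := by
      refine le_iInf fun γ => ?_
      refine le_trans
        (iInf_le (fun γ : L => μ γ ((fun x : S => x.1 γ) '' (K₁ ∪ K₂))) γ) ?_
      rw [Set.image_union]
      exact measure_union_le _ _
    exact h2.trans (le_of_eq key.symm)
  have hm_sup_eq : ∀ K₁ K₂ : Set S, IsCompact K₁ → IsCompact K₂ → Disjoint K₁ K₂ →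
      m (K₁ ∪ K₂) = m K₁ + m K₂ := by
    intro K₁ K₂ hK₁ hK₂ hd
    obtain ⟨γ₀, hγ₀⟩ := hsep K₁ K₂ hK₁ hK₂ hd
    have hDall : ∀ γ : {γ : L // γ₀ ≤ γ},
        Disjoint ((fun x : S => x.1 γ.1) '' K₁) ((fun x : S => x.1 γ.1) '' K₂) := by
      rintro ⟨γ, hγ⟩
      rw [Set.disjoint_left]
      rintro z hz₁ hz₂
      have hz₁' : p hγ z ∈ (fun x : S => x.1 γ₀) '' K₁ := by
        rw [himg γ₀ γ hγ K₁]; exact Set.mem_image_of_mem _ hz₁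
      have hz₂' : p hγ z ∈ (fun x : S => x.1 γ₀) '' K₂ := by
        rw [himg γ₀ γ hγ K₂]; exact Set.mem_image_of_mem _ hz₂
      exact Set.disjoint_left.mp hγ₀ hz₁' hz₂'
    haveI : Nonempty {γ : L // γ₀ ≤ γ} := ⟨⟨γ₀, le_refl γ₀⟩⟩
    rw [hcof (K₁ ∪ K₂) (hK₁.union hK₂) γ₀, hcof K₁ hK₁ γ₀, hcof K₂ hK₂ γ₀]
    have key : (⨅ γ : {γ : L // γ₀ ≤ γ}, μ γ.1 ((fun x : S => x.1 γ.1) '' K₁))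
        + (⨅ γ : {γ : L // γ₀ ≤ γ}, μ γ.1 ((fun x : S => x.1 γ.1) '' K₂))
        = ⨅ γ : {γ : L // γ₀ ≤ γ},
            (μ γ.1 ((fun x : S => x.1 γ.1) '' K₁) + μ γ.1 ((fun x : S => x.1 γ.1) '' K₂)) := by
      apply ENNReal.iInf_add_iInf
      rintro ⟨i, hi⟩ ⟨j, hj⟩
      obtain ⟨k, hik, hjk⟩ := directed_of (· ≤ ·) i j
      exact ⟨⟨k, hi.trans hik⟩,
        add_le_add (hant K₁ hK₁ i k hik) (hant K₂ hK₂ j k hjk)⟩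
    rw [key]
    refine iInf_congr fun γ => ?_
    rw [Set.image_union]
    exact measure_union (hDall γ) (himm γ.1 _ hK₂)
  -- build the content
  let c : Content S :=
    { toFun := fun K => (m K).toNNReal
      mono' := fun K₁ K₂ h =>
        ENNReal.toNNReal_mono (hmne _) (hm_mono _ _ h)
      sup_disjoint' := by
        intro K₁ K₂ hd _ _
        show (m ((K₁ ⊔ K₂ : TopologicalSpace.Compacts S) : Set S)).toNNReal
          = (m (K₁ : Set S)).toNNReal + (m (K₂ : Set S)).toNNReal
        have h1 : m ((K₁ ⊔ K₂ : TopologicalSpace.Compacts S) : Set S)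
            = m (K₁ : Set S) + m (K₂ : Set S) := by
          have h0 : ((K₁ ⊔ K₂ : TopologicalSpace.Compacts S) : Set S)
              = (K₁ : Set S) ∪ (K₂ : Set S) := rfl
          rw [h0]
          exact hm_sup_eq _ _ K₁.2 K₂.2 hd
        rw [h1, ENNReal.toNNReal_add (hmne _) (hmne _)]
      sup_le' := by
        intro K₁ K₂
        show (m ((K₁ ⊔ K₂ : TopologicalSpace.Compacts S) : Set S)).toNNReal
          ≤ (m (K₁ : Set S)).toNNReal + (m (K₂ : Set S)).toNNReal
        have h1 : m ((K₁ ⊔ K₂ : TopologicalSpace.Compacts S) : Set S)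
            ≤ m (K₁ : Set S) + m (K₂ : Set S) := by
          have h0 : ((K₁ ⊔ K₂ : TopologicalSpace.Compacts S) : Set S)
              = (K₁ : Set S) ∪ (K₂ : Set S) := rfl
          rw [h0]
          exact hm_sup_le _ _ K₁.2 K₂.2
        have h2 := ENNReal.toNNReal_mono
          (ENNReal.add_ne_top.mpr ⟨hmne _, hmne _⟩) h1
        rwa [ENNReal.toNNReal_add (hmne _) (hmne _)] at h2 }
  have hcoe : ∀ K : TopologicalSpace.Compacts S, (c K : ℝ≥0∞) = m K := fun K =>
    ENNReal.coe_toNNReal (hmne _)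
  -- regularity of the content
  have hContReg : MeasureTheory.Content.ContentRegular c := by
    intro K
    apply le_antisymm
    · refine le_iInf fun K' => le_iInf fun hK' => ?_
      rw [hcoe, hcoe]
      exact hm_mono _ _ (hK'.trans interior_subset)
    · rw [hcoe]
      refine ENNReal.le_of_forall_pos_le_add fun ε hε _ => ?_
      have hlt : (⨅ γ : L, μ γ ((fun x : S => x.1 γ) '' (K : Set S)))
          < m (K : Set S) + ε := by
        exact ENNReal.lt_add_right (hmne _) (by exact_mod_cast hε.ne')
      obtain ⟨γ, hγ⟩ := iInf_lt_iff.mp hlt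
      -- outer regularity to get an open set
      haveI := hreg γ
      obtain ⟨U, hBU, hU, hμU⟩ := Set.exists_isOpen_lt_of_lt _ _ hγ
      -- squeeze a compact set between
      obtain ⟨V, hV, hBV, hVU⟩ := normal_exists_closure_subset
        ((K.2.image (hπc γ)).isClosed) hU hBU
      refine iInf_le_of_le ⟨(fun x : S => x.1 γ) ⁻¹' (closure V),
        ((isClosed_closure.preimage (hπc γ)).isCompact)⟩ ?_
      show (⨅ (_ : (K : Set S) ⊆ interior ((fun x : S => x.1 γ) ⁻¹' (closure V))),
        (c ⟨(fun x : S => x.1 γ) ⁻¹' (closure V),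
          ((isClosed_closure.preimage (hπc γ)).isCompact)⟩ : ℝ≥0∞)) ≤ m (K : Set S) + ε
      refine iInf_le_of_le ?_ ?_
      · -- K ⊆ interior K'
        refine (fun x hx => ?_ : (K : Set S) ⊆ _)
        have hxV : x ∈ (fun x : S => x.1 γ) ⁻¹' V := hBV (Set.mem_image_of_mem _ hx)
        exact interior_maximal (Set.preimage_mono subset_closure) (hV.preimage (hπc γ)) hxV
      · -- c K' ≤ m K + ε
        rw [hcoe]
        refine le_trans (iInf_le _ γ) ?_
        have him : (fun x : S => x.1 γ) '' ((fun x : S => x.1 γ) ⁻¹' (closure V))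
            = closure V := by
          rw [hpre γ γ (le_refl γ) (closure V)]
          ext z; simp [hrefl γ (le_refl γ) z]
        simp only [TopologicalSpace.Compacts.coe_mk]
        rw [him]
        exact le_trans (measure_mono hVU) hμU.le
  -- the measure
  set ν : Measure S := c.measure with hνdef
  have hν_cpt : ∀ K : TopologicalSpace.Compacts S, ν K = m K := fun K => by
    rw [hνdef, c.measure_eq_content_of_regular hContReg K, hcoe]
  have hν_reg : ν.Regular := c.regular
  have hπuniv : ∀ γ : L, (fun x : S => x.1 γ) '' Set.univ = Set.univ := by
    intro γ
    rw [Set.image_univ, Set.range_eq_univ]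
    intro y; obtain ⟨x, hx⟩ := hπsurj γ y; exact ⟨x, hx⟩
  have hν_univ : ν Set.univ = 1 := by
    have := hν_cpt ⟨Set.univ, isCompact_univ⟩
    simp only [TopologicalSpace.Compacts.coe_mk] at this
    rw [this, hmdef]
    simp only [hπuniv]
    simp [measure_univ]
  haveI : IsProbabilityMeasure ν := ⟨hν_univ⟩
  -- the pushforwards
  have hmap : ∀ γ : L, ν.map (fun x : S => x.1 γ) = μ γ := by
    intro γ
    haveI := Measure.isProbabilityMeasure_map (μ := ν) (hπm γ).aemeasurable
    refine ext_of_generate_finite {s : Set (X γ) | IsClosed s} ?_ isPiSystem_isClosed ?_ ?_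
    · rw [BorelSpace.measurable_eq (α := X γ), borel_eq_generateFrom_isClosed]
    · intro F hF
      rw [Measure.map_apply (hπm γ) hF.measurableSet]
      have hKc : IsCompact ((fun x : S => x.1 γ) ⁻¹' F) := (hF.preimage (hπc γ)).isCompact
      have := hν_cpt ⟨_, hKc⟩
      simp only [TopologicalSpace.Compacts.coe_mk] at this
      rw [this, hcof _ hKc γ]
      haveI : Nonempty {γ' : L // γ ≤ γ'} := ⟨⟨γ, le_refl γ⟩⟩
      have hterm : ∀ γ' : {γ' : L // γ ≤ γ'},
          μ γ'.1 ((fun x : S => x.1 γ'.1) '' ((fun x : S => x.1 γ) ⁻¹' F)) = μ γ F := by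
        rintro ⟨γ', hγ'⟩
        rw [hpre γ γ' hγ' F, ← hcons γ γ' hγ',
          Measure.map_apply (hcont hγ').measurable hF.measurableSet]
      simp only [hterm, iInf_const]
    · rw [Measure.map_apply (hπm γ) MeasurableSet.univ]
      simp [hν_univ, measure_univ]
  have hint : ∀ (γ : L) (f : X γ → ℝ), Continuous f →
      ∫ x : S, f (x.1 γ) ∂ν = ∫ y, f y ∂(μ γ) := by
    intro γ f hf
    rw [← hmap γ, integral_map (hπm γ).aemeasurable hf.aestronglyMeasurable]
  -- integrability of continuous functions
  have hIg : ∀ (ρ : Measure S), IsFiniteMeasure ρ → ∀ g : C(S, ℝ),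
      Integrable (fun x => g x) ρ := by
    intro ρ hρ g
    haveI := hρ
    exact g.continuous.integrable_of_hasCompactSupport
      (IsCompact.of_isClosed_subset isCompact_univ (isClosed_tsupport _) (Set.subset_univ _))
  -- continuity of integration on C(S, ℝ)
  have hIcont : ∀ (ρ : Measure S), IsProbabilityMeasure ρ →
      Continuous fun g : C(S, ℝ) => ∫ x, g x ∂ρ := by
    intro ρ hρ
    haveI := hρ
    refine (LipschitzWith.of_dist_le_mul fun g₁ g₂ => ?_ :
      LipschitzWith 1 fun g : C(S, ℝ) => ∫ x, g x ∂ρ).continuous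
    rw [NNReal.coe_one, one_mul, Real.dist_eq, ← integral_sub (hIg ρ inferInstance g₁)
      (hIg ρ inferInstance g₂)]
    rw [← Real.norm_eq_abs]
    refine le_trans (norm_integral_le_of_norm_le_const (C := dist g₁ g₂)
      (Filter.Eventually.of_forall fun x => ?_)) ?_
    · rw [← dist_eq_norm]
      exact ContinuousMap.dist_apply_le_dist x
    · rw [probReal_univ, mul_one]
  refine ⟨ν, ⟨hν_reg, hint⟩, ?_⟩
  -- uniqueness
  rintro ν' ⟨hreg', hint'⟩
  haveI : ν'.OuterRegular := hreg'.toOuterRegular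
  haveI : IsFiniteMeasureOnCompacts ν' := hreg'.toIsFiniteMeasureOnCompacts
  haveI : IsFiniteMeasure ν' := CompactSpace.isFiniteMeasure
  obtain ⟨γ₀⟩ := ‹Nonempty L›
  have hν'_univ : ν' Set.univ = 1 := by
    have h1 := hint' γ₀ (fun _ => (1 : ℝ)) continuous_const
    rw [integral_const, integral_const, smul_eq_mul, smul_eq_mul, mul_one, mul_one,
      probReal_univ (μ := μ γ₀)] at h1
    have h2 : (ν' Set.univ).toReal = 1 := h1
    have h3 : ν' Set.univ ≠ ⊤ := measure_ne_top _ _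
    rw [← ENNReal.ofReal_toReal h3, h2]
    simp
  haveI : IsProbabilityMeasure ν' := ⟨hν'_univ⟩
  -- the cylindrical subalgebra
  let A : Subalgebra ℝ C(S, ℝ) :=
    { carrier := {f : C(S, ℝ) | ∃ (γ : L) (g : C(X γ, ℝ)), ∀ x : S, f x = g (x.1 γ)}
      mul_mem' := by
        rintro f₁ f₂ ⟨γ₁, g₁, hg₁⟩ ⟨γ₂, g₂, hg₂⟩
        obtain ⟨δ, h₁, h₂⟩ := directed_of (· ≤ ·) γ₁ γ₂
        refine ⟨δ, (g₁.comp ⟨p h₁, hcont h₁⟩) * (g₂.comp ⟨p h₂, hcont h₂⟩), fun x => ?_⟩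
        simp [hg₁ x, hg₂ x, x.2 γ₁ δ h₁, x.2 γ₂ δ h₂]
      one_mem' := ⟨γ₀, 1, fun x => rfl⟩
      add_mem' := by
        rintro f₁ f₂ ⟨γ₁, g₁, hg₁⟩ ⟨γ₂, g₂, hg₂⟩
        obtain ⟨δ, h₁, h₂⟩ := directed_of (· ≤ ·) γ₁ γ₂
        refine ⟨δ, (g₁.comp ⟨p h₁, hcont h₁⟩) + (g₂.comp ⟨p h₂, hcont h₂⟩), fun x => ?_⟩
        simp [hg₁ x, hg₂ x, x.2 γ₁ δ h₁, x.2 γ₂ δ h₂]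
      zero_mem' := ⟨γ₀, 0, fun x => rfl⟩
      algebraMap_mem' := fun r => ⟨γ₀, algebraMap ℝ C(X γ₀, ℝ) r, fun x => rfl⟩ }
  have hA_sep : A.SeparatesPoints := by
    intro x y hxy
    have : ∃ γ : L, x.1 γ ≠ y.1 γ := by
      by_contra h
      push_neg at h
      exact hxy (Subtype.ext (funext h))
    obtain ⟨γ, hγ⟩ := this
    obtain ⟨g, hg0, hg1, -⟩ := exists_continuous_zero_one_of_isClosed
      (isClosed_singleton (x := x.1 γ)) (isClosed_singleton (x := y.1 γ))
      (Set.disjoint_singleton.mpr hγ)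
    refine ⟨fun z : S => g (z.1 γ), ⟨g.comp ⟨fun z : S => z.1 γ, hπc γ⟩,
      ⟨γ, g, fun z => rfl⟩, rfl⟩, ?_⟩
    have h0 : g (x.1 γ) = 0 := hg0 rfl
    have h1 : g (y.1 γ) = 1 := hg1 rfl
    simp [h0, h1]
  have hA_int : ∀ f ∈ (A : Set C(S, ℝ)), ∫ x, f x ∂ν' = ∫ x, f x ∂ν := by
    rintro f ⟨γ, g, hg⟩
    have e1 : ∫ x, f x ∂ν' = ∫ x : S, g (x.1 γ) ∂ν' := by
      congr 1; ext x; exact hg x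
    have e2 : ∫ x, f x ∂ν = ∫ x : S, g (x.1 γ) ∂ν := by
      congr 1; ext x; exact hg x
    rw [e1, e2, hint' γ g g.continuous, hint γ g g.continuous]
  have hall : ∀ g : C(S, ℝ), ∫ x, g x ∂ν' = ∫ x, g x ∂ν := by
    intro g
    have hclosed : IsClosed {g : C(S, ℝ) | ∫ x, g x ∂ν' = ∫ x, g x ∂ν} :=
      isClosed_eq (hIcont ν' inferInstance) (hIcont ν inferInstance)
    have hsub : closure (A : Set C(S, ℝ)) ⊆ {g : C(S, ℝ) | ∫ x, g x ∂ν' = ∫ x, g x ∂ν} :=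
      closure_minimal hA_int hclosed
    have hg : g ∈ closure (A : Set C(S, ℝ)) := by
      rw [← Subalgebra.topologicalClosure_coe,
        ContinuousMap.subalgebra_topologicalClosure_eq_top_of_separatesPoints A hA_sep]
      trivial
    exact hsub hg
  -- comparison on closed sets
  have hle : ∀ (ρ₁ ρ₂ : Measure S), IsProbabilityMeasure ρ₁ → IsProbabilityMeasure ρ₂ →
      ρ₂.OuterRegular → (∀ g : C(S, ℝ), ∫ x, g x ∂ρ₁ = ∫ x, g x ∂ρ₂) →
      ∀ F : Set S, IsClosed F → ρ₁ F ≤ ρ₂ F := by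
    intro ρ₁ ρ₂ hρ₁ hρ₂ hOR heq F hF
    haveI := hρ₁; haveI := hρ₂; haveI := hOR
    rw [Set.measure_eq_iInf_isOpen F ρ₂]
    refine le_iInf fun U => le_iInf fun hFU => le_iInf fun hU => ?_
    obtain ⟨g, hg0, hg1, hg01⟩ := exists_continuous_zero_one_of_isClosed
      hU.isClosed_compl hF (by
        rw [Set.disjoint_left]; intro z hz1 hz2; exact hz1 (hFU hz2))
    have hIg1 := hIg ρ₁ inferInstance g
    have hIg2 := hIg ρ₂ inferInstance g
    have key1 : (ρ₁ F).toReal ≤ ∫ x, g x ∂ρ₁ := by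
      have : (ρ₁ F).toReal = ∫ x, F.indicator (fun _ => (1 : ℝ)) x ∂ρ₁ := by
        rw [integral_indicator_const (1 : ℝ) hF.measurableSet]; simp; rfl
      rw [this]
      refine integral_mono ((integrable_const (1 : ℝ)).indicator hF.measurableSet) hIg1 ?_
      intro x
      by_cases hx : x ∈ F
      · simp only [Set.indicator_of_mem hx]
        exact (hg1 hx).ge
      · simp only [Set.indicator_of_notMem hx]
        exact (hg01 x).1
    have key2 : ∫ x, g x ∂ρ₂ ≤ (ρ₂ U).toReal := by
      have : (ρ₂ U).toReal = ∫ x, U.indicator (fun _ => (1 : ℝ)) x ∂ρ₂ := by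
        rw [integral_indicator_const (1 : ℝ) hU.measurableSet]; simp; rfl
      rw [this]
      refine integral_mono hIg2 ((integrable_const (1 : ℝ)).indicator hU.measurableSet) ?_
      intro x
      by_cases hx : x ∈ U
      · simp only [Set.indicator_of_mem hx]
        exact (hg01 x).2
      · simp only [Set.indicator_of_notMem hx]
        exact (hg0 hx).le
    have := key1.trans ((heq g).le.trans key2)
    exact (ENNReal.toReal_le_toReal (measure_ne_top _ _) (measure_ne_top _ _)).mp this
  -- conclude
  refine ext_of_generate_finite {s : Set S | IsClosed s} ?_ isPiSystem_isClosed ?_ ?_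
  · show borel S = _
    exact borel_eq_generateFrom_isClosed
  · intro F hF
    exact le_antisymm (hle ν' ν inferInstance inferInstance inferInstance hall F hF)
      (hle ν ν' inferInstance inferInstance inferInstance (fun g => (hall g).symm) F hF)
  · rw [hν'_univ, hν_univ]
end

section
/- The function χ(x) = exp(−½⟨x, Cx⟩) on a real inner product space is of positive type: for any c₁,…,cₙ ∈ ℂ and v₁,…,vₙ in the space, ∑_{k,l} c_k c̄_l χ(v_k − v_l) ≥ 0, where C is a positive-definite symmetric bilinear form. -/
open Finset Nat in
lemma aux_pow_nonneg {n N : ℕ} (x : Fin n → Fin N → ℝ) :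
    ∀ (m : ℕ) (e : Fin n → ℝ),
      0 ≤ ∑ k, ∑ l, e k * e l * (∑ j, x k j * x l j) ^ m := by
  intro m
  induction m with
  | zero =>
    intro e
    have : ∑ k, ∑ l, e k * e l * (∑ j, x k j * x l j) ^ 0
        = (∑ k, e k) * (∑ l, e l) := by
      rw [Finset.sum_mul_sum]
      simp
    rw [this]
    exact mul_self_nonneg _
  | succ m ih =>
    intro e
    have h1 : ∀ k l : Fin n, e k * e l * (∑ j, x k j * x l j) ^ (m + 1)
        = ∑ j, (e k * x k j) * (e l * x l j) * (∑ i, x k i * x l i) ^ m := by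
      intro k l
      rw [pow_succ, Finset.mul_sum, Finset.mul_sum]
      refine Finset.sum_congr rfl fun j _ => ?_
      ring
    calc ∑ k, ∑ l, e k * e l * (∑ j, x k j * x l j) ^ (m + 1)
        = ∑ k, ∑ l, ∑ j, (e k * x k j) * (e l * x l j) * (∑ i, x k i * x l i) ^ m := by
          simp only [h1]
      _ = ∑ k, ∑ j, ∑ l, (e k * x k j) * (e l * x l j) * (∑ i, x k i * x l i) ^ m :=
          Finset.sum_congr rfl fun k _ => Finset.sum_comm
      _ = ∑ j, ∑ k, ∑ l, (e k * x k j) * (e l * x l j) * (∑ i, x k i * x l i) ^ m :=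
          Finset.sum_comm
      _ ≥ 0 := Finset.sum_nonneg fun j _ => ih (fun k => e k * x k j)

open Finset Nat in
lemma aux_exp_nonneg {n N : ℕ} (x : Fin n → Fin N → ℝ) (e : Fin n → ℝ) :
    0 ≤ ∑ k, ∑ l, e k * e l * Real.exp (∑ j, x k j * x l j) := by
  have hexp : ∀ t : ℝ, Real.exp t = ∑' m : ℕ, t ^ m / m ! := by
    intro t
    rw [Real.exp_eq_exp_ℝ, NormedSpace.exp_eq_tsum_div]
  have hsummable : ∀ k l : Fin n, Summable (fun m : ℕ =>
      e k * e l * ((∑ j, x k j * x l j) ^ m / m !)) :=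
    fun k l => (Real.summable_pow_div_factorial _).mul_left _
  have key : ∑ k, ∑ l, e k * e l * Real.exp (∑ j, x k j * x l j)
      = ∑' m : ℕ, ∑ k, ∑ l, e k * e l * ((∑ j, x k j * x l j) ^ m / m !) := by
    rw [Summable.tsum_finsetSum (fun k _ => summable_sum (fun l _ => hsummable k l))]
    refine Finset.sum_congr rfl fun k _ => ?_
    rw [Summable.tsum_finsetSum (fun l _ => hsummable k l)]
    refine Finset.sum_congr rfl fun l _ => ?_
    rw [hexp, ← tsum_mul_left]
  rw [key]
  refine tsum_nonneg fun m => ?_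
  have : ∑ k, ∑ l, e k * e l * ((∑ j, x k j * x l j) ^ m / m !)
      = (∑ k, ∑ l, e k * e l * (∑ j, x k j * x l j) ^ m) / m ! := by
    rw [Finset.sum_div]
    refine Finset.sum_congr rfl fun k _ => ?_
    rw [Finset.sum_div]
    refine Finset.sum_congr rfl fun l _ => ?_
    ring
  rw [this]
  exact div_nonneg (aux_pow_nonneg x m e) (by positivity)


open Matrix in
open scoped MatrixOrder in
lemma aux_gram {V : Type*} [AddCommGroup V] [Module ℝ V]
    (C : V →ₗ[ℝ] V →ₗ[ℝ] ℝ)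
    (hsymm : ∀ x y, C x y = C y x)
    (hpos : ∀ x, x ≠ 0 → 0 < C x x)
    (n : ℕ) (v : Fin n → V) :
    ∃ x : Fin n → Fin n → ℝ, ∀ k l, C (v k) (v l) = ∑ j, x k j * x l j := by
  set G : Matrix (Fin n) (Fin n) ℝ := Matrix.of fun k l => C (v k) (v l) with hGdef
  have hG : G.PosSemidef := by
    rw [Matrix.posSemidef_iff_dotProduct_mulVec]
    constructor
    · ext k l
      simp only [Matrix.conjTranspose_apply, Matrix.of_apply, star_trivial, hGdef]
      exact hsymm _ _
    · intro y
      have hcalc : star y ⬝ᵥ G *ᵥ y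
          = C (∑ k, y k • v k) (∑ l, y l • v l) := by
        simp only [star_trivial, dotProduct, Matrix.mulVec, map_sum,
          LinearMap.sum_apply, Matrix.of_apply, hGdef, Finset.mul_sum]
        refine Finset.sum_congr rfl fun k _ => Finset.sum_congr rfl fun l _ => ?_
        simp only [LinearMap.map_smul, LinearMap.smul_apply, smul_eq_mul,
          hsymm (v l) (v k)]
        ring
      rw [hcalc]
      rcases eq_or_ne (∑ k, y k • v k) 0 with h | h
      · rw [h]; simp
      · exact (hpos _ h).le
  obtain ⟨B, hB⟩ := CStarAlgebra.nonneg_iff_eq_star_mul_self.mp hG.nonneg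
  refine ⟨fun k j => B j k, fun k l => ?_⟩
  have h1 : G k l = (star B * B) k l := by rw [← hB]
  have h2 : (star B * B) k l = ∑ j, B j k * B j l := by
    rw [Matrix.mul_apply]
    refine Finset.sum_congr rfl fun j _ => ?_
    rw [Matrix.star_apply, star_trivial]
  show G k l = _
  rw [h1, h2]

lemma aux_skew {n : ℕ} (f : Fin n → Fin n → ℝ) (h : ∀ k l, f l k = - f k l) :
    ∑ k, ∑ l, f k l = 0 := by
  have h1 : ∑ k, ∑ l, f k l = - ∑ k, ∑ l, f k l := by
    calc ∑ k, ∑ l, f k l = ∑ l, ∑ k, f k l := Finset.sum_comm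
      _ = ∑ l, ∑ k, -(f l k) :=
          Finset.sum_congr rfl fun l _ => Finset.sum_congr rfl fun k _ => h l k
      _ = - ∑ l, ∑ k, f l k := by simp
  linarith

/-- The function `χ(x) = exp(−½⟨x, Cx⟩)` on a real vector space equipped with a positive-definite
symmetric bilinear form `C` is of positive type: for any `c₁,…,cₙ ∈ ℂ` and `v₁,…,vₙ` in the
space, `∑_{k,l} c_k c̄_l χ(v_k − v_l)` is a nonnegative real number. -/
theorem stmt_10 {V : Type*} [AddCommGroup V] [Module ℝ V]
    (C : V →ₗ[ℝ] V →ₗ[ℝ] ℝ)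
    (hsymm : ∀ x y, C x y = C y x)
    (hpos : ∀ x, x ≠ 0 → 0 < C x x)
    (n : ℕ) (c : Fin n → ℂ) (v : Fin n → V) :
    ∃ r : ℝ, 0 ≤ r ∧
      (∑ k, ∑ l, c k * (starRingEnd ℂ) (c l) *
          (Real.exp (-(1 / 2) * C (v k - v l) (v k - v l)) : ℝ)) = (r : ℂ) := by
  obtain ⟨x, hx⟩ := aux_gram C hsymm hpos n v
  set a : Fin n → ℝ := fun k => (c k).re with ha
  set b : Fin n → ℝ := fun k => (c k).im with hb
  set t : Fin n → ℝ := fun k => Real.exp (-(1 / 2) * C (v k) (v k)) with ht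
  set E : Fin n → Fin n → ℝ :=
    fun k l => Real.exp (-(1 / 2) * C (v k - v l) (v k - v l)) with hEdef
  have hCsub : ∀ k l, C (v k - v l) (v k - v l)
      = C (v k) (v k) - 2 * C (v k) (v l) + C (v l) (v l) := by
    intro k l
    simp only [map_sub, LinearMap.sub_apply]
    rw [hsymm (v l) (v k)]
    ring
  have hE : ∀ k l, E k l = t k * t l * Real.exp (∑ j, x k j * x l j) := by
    intro k l
    rw [hEdef, ht]
    simp only
    rw [← Real.exp_add, ← Real.exp_add, hCsub, ← hx]
    congr 1
    ring
  have hEsymm : ∀ k l, E l k = E k l := by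
    intro k l
    have hxc : (∑ j, x l j * x k j) = ∑ j, x k j * x l j :=
      Finset.sum_congr rfl fun j _ => mul_comm _ _
    rw [hE, hE, hxc]
    ring
  have hterm : ∀ k l, c k * (starRingEnd ℂ) (c l) * ((E k l : ℝ) : ℂ)
      = (((a k * a l + b k * b l) * E k l : ℝ) : ℂ)
        + (((b k * a l - a k * b l) * E k l : ℝ) : ℂ) * Complex.I := by
    intro k l
    simp only [ha, hb]
    simp only [Complex.ext_iff, Complex.add_re, Complex.add_im, Complex.mul_re,
      Complex.mul_im, Complex.ofReal_re, Complex.ofReal_im, Complex.conj_re,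
      Complex.conj_im, Complex.I_re, Complex.I_im]
    constructor <;> ring
  refine ⟨∑ k, ∑ l, (a k * t k) * (a l * t l) * Real.exp (∑ j, x k j * x l j)
        + ∑ k, ∑ l, (b k * t k) * (b l * t l) * Real.exp (∑ j, x k j * x l j),
      add_nonneg (aux_exp_nonneg x _) (aux_exp_nonneg x _), ?_⟩
  have hskew : ∑ k, ∑ l, (b k * a l - a k * b l) * E k l = 0 := by
    refine aux_skew _ fun k l => ?_
    rw [hEsymm k l]
    ring
  have hreal : ∑ k, ∑ l, (a k * a l + b k * b l) * E k l
      = ∑ k, ∑ l, (a k * t k) * (a l * t l) * Real.exp (∑ j, x k j * x l j)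
        + ∑ k, ∑ l, (b k * t k) * (b l * t l) * Real.exp (∑ j, x k j * x l j) := by
    have h1 : ∀ k l : Fin n, (a k * a l + b k * b l) * E k l
        = (a k * t k) * (a l * t l) * Real.exp (∑ j, x k j * x l j)
          + (b k * t k) * (b l * t l) * Real.exp (∑ j, x k j * x l j) := by
      intro k l; rw [hE]; ring
    simp only [h1, Finset.sum_add_distrib]
  have main : (∑ k, ∑ l, c k * (starRingEnd ℂ) (c l) * ((E k l : ℝ) : ℂ))
      = ((∑ k, ∑ l, (a k * a l + b k * b l) * E k l : ℝ) : ℂ)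
        + ((∑ k, ∑ l, (b k * a l - a k * b l) * E k l : ℝ) : ℂ) * Complex.I := by
    simp only [hterm, Finset.sum_add_distrib, ← Finset.sum_mul]
    push_cast
    ring
  rw [main, hskew, hreal]
  simp
end
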